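/- arXiv:2311.17899 — 5 statements merged into one kernel-verified Lean document; each statement's English description precedes it below -/
import Mathlib

section
/- For t ≠ 0, the linear map diag(1, e^t, e^{-t}) maps the lattice Ξ_t = ℤ(1,0,0) + ℤ(0,1,1) + ℤ(0,e^t,e^{-t}) into itself bijectively, provided e^t + e^{-t} is an integer. -/
open Real

theorem stmt3 (t : ℝ) (ht : t ≠ 0) (h : ∃ m : ℤ, (m : ℝ) = Real.exp t + Real.exp (-t)) :
    Set.BijOn (Matrix.diagonal ![1, Real.exp t, Real.exp (-t)]).mulVec
      (Submodule.span ℤ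
        ({![1, 0, 0], ![0, 1, 1], ![0, Real.exp t, Real.exp (-t)]} : Set (Fin 3 → ℝ)))
      (Submodule.span ℤ
        ({![1, 0, 0], ![0, 1, 1], ![0, Real.exp t, Real.exp (-t)]} : Set (Fin 3 → ℝ))) := by
  obtain ⟨m, hm⟩ := h
  set A : Matrix (Fin 3) (Fin 3) ℝ := Matrix.diagonal ![1, Real.exp t, Real.exp (-t)] with hA
  set B : Matrix (Fin 3) (Fin 3) ℝ := Matrix.diagonal ![1, Real.exp (-t), Real.exp t] with hB
  set S : Set (Fin 3 → ℝ) := {![1, 0, 0], ![0, 1, 1], ![0, Real.exp t, Real.exp (-t)]} with hS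
  have hexp : Real.exp t * Real.exp (-t) = 1 := by
    rw [← Real.exp_add]; simp
  have hBA : ∀ x, B.mulVec (A.mulVec x) = x := by
    intro x
    funext i
    fin_cases i <;> simp [hA, hB, Matrix.mulVec_diagonal]
    · linear_combination (x 1) * hexp
    · linear_combination (x 2) * hexp
  have hAB : ∀ x, A.mulVec (B.mulVec x) = x := by
    intro x
    funext i
    fin_cases i <;> simp [hA, hB, Matrix.mulVec_diagonal]
    · linear_combination (x 1) * hexp
    · linear_combination (x 2) * hexp
  -- generator memberships
  have mem1 : (![1, 0, 0] : Fin 3 → ℝ) ∈ Submodule.span ℤ S :=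
    Submodule.subset_span (by simp [hS])
  have mem2 : (![0, 1, 1] : Fin 3 → ℝ) ∈ Submodule.span ℤ S :=
    Submodule.subset_span (by simp [hS])
  have mem3 : (![0, Real.exp t, Real.exp (-t)] : Fin 3 → ℝ) ∈ Submodule.span ℤ S :=
    Submodule.subset_span (by simp [hS])
  have smul_eq : ∀ (z : ℤ) (x : Fin 3 → ℝ), z • x = (z : ℝ) • x := by
    intro z x; exact (Int.cast_smul_eq_zsmul ℝ z x).symm
  have hmapA : ∀ x ∈ Submodule.span ℤ S, A.mulVec x ∈ Submodule.span ℤ S := by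
    intro x hx
    induction hx using Submodule.span_induction with
    | mem y hy =>
      rcases hy with hy | hy | hy
      · subst hy
        have : A.mulVec ![1, 0, 0] = ![1, 0, 0] := by
          funext i; fin_cases i <;> simp [hA, Matrix.mulVec_diagonal]
        rw [this]; exact mem1
      · subst hy
        have : A.mulVec ![0, 1, 1] = ![0, Real.exp t, Real.exp (-t)] := by
          funext i; fin_cases i <;> simp [hA, Matrix.mulVec_diagonal]
        rw [this]; exact mem3
      · rw [Set.mem_singleton_iff] at hy; subst hy
        have : A.mulVec ![0, Real.exp t, Real.exp (-t)]
            = m • (![0, Real.exp t, Real.exp (-t)] : Fin 3 → ℝ) - ![0, 1, 1] := by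
          funext i
          rw [smul_eq]
          fin_cases i <;> simp [hA, Matrix.mulVec_diagonal]
          · linear_combination (-(Real.exp t)) * hm - hexp
          · linear_combination (-(Real.exp (-t))) * hm - hexp
        rw [this]
        exact Submodule.sub_mem _ (Submodule.smul_mem _ m mem3) mem2
    | zero => simp [Matrix.mulVec_zero]
    | add y z _ _ hy hz => rw [Matrix.mulVec_add]; exact Submodule.add_mem _ hy hz
    | smul z y _ hy =>
      rw [smul_eq, Matrix.mulVec_smul, ← smul_eq]
      exact Submodule.smul_mem _ z hy
  have hmapB : ∀ x ∈ Submodule.span ℤ S, B.mulVec x ∈ Submodule.span ℤ S := by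
    intro x hx
    induction hx using Submodule.span_induction with
    | mem y hy =>
      rcases hy with hy | hy | hy
      · subst hy
        have : B.mulVec ![1, 0, 0] = ![1, 0, 0] := by
          funext i; fin_cases i <;> simp [hB, Matrix.mulVec_diagonal]
        rw [this]; exact mem1
      · subst hy
        have : B.mulVec ![0, 1, 1]
            = m • (![0, 1, 1] : Fin 3 → ℝ) - ![0, Real.exp t, Real.exp (-t)] := by
          funext i
          rw [smul_eq]
          fin_cases i <;> simp [hB, Matrix.mulVec_diagonal]
          · linear_combination -hm
          · linear_combination -hm
        rw [this]
        exact Submodule.sub_mem _ (Submodule.smul_mem _ m mem2) mem3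
      · rw [Set.mem_singleton_iff] at hy; subst hy
        have : B.mulVec ![0, Real.exp t, Real.exp (-t)] = ![0, 1, 1] := by
          funext i; fin_cases i <;> simp [hB, Matrix.mulVec_diagonal]
          · linear_combination hexp
          · linear_combination hexp
        rw [this]; exact mem2
    | zero => simp [Matrix.mulVec_zero]
    | add y z _ _ hy hz => rw [Matrix.mulVec_add]; exact Submodule.add_mem _ hy hz
    | smul z y _ hy =>
      rw [smul_eq, Matrix.mulVec_smul, ← smul_eq]
      exact Submodule.smul_mem _ z hy
  refine ⟨hmapA, ?_, ?_⟩
  · intro x _ y _ hxy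
    have := congrArg B.mulVec hxy
    rwa [hBA, hBA] at this
  · intro y hy
    exact ⟨B.mulVec y, hmapB y hy, hAB y⟩
end

section
/- For λ ∈ ℝ \ {0,1}, the map α sending the Heisenberg group element (x₁,x₂,x₃) to the affine map v ↦ [[1,0,0],[0,1,0],[x₂,x₁,1]]·v + (x₁, λx₂, (λ-1)x₃ + x₁x₂) is a group homomorphism from ℋ₃(ℝ) to Aff(ℝ³). -/
/-- The Heisenberg group product on ℝ³ (coordinates (x₁,x₂,x₃)). -/
def h3Mul (a b : ℝ × ℝ × ℝ) : ℝ × ℝ × ℝ :=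
  (a.1 + b.1, a.2.1 + b.2.1, a.2.2 + b.2.2 + a.1 * b.2.1)

/-- The affine map v ↦ [[1,0,0],[0,1,0],[x₂,x₁,1]]·v + (x₁, λx₂, (λ-1)x₃ + x₁x₂). -/
def alphaTw (l : ℝ) (g : ℝ × ℝ × ℝ) (v : Fin 3 → ℝ) : Fin 3 → ℝ :=
  ![v 0 + g.1, v 1 + l * g.2.1,
    g.2.1 * v 0 + g.1 * v 1 + v 2 + (l - 1) * g.2.2 + g.1 * g.2.1]

theorem stmt9 (l : ℝ) (hl0 : l ≠ 0) (hl1 : l ≠ 1) :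
    (∀ g h : ℝ × ℝ × ℝ, alphaTw l (h3Mul g h) = alphaTw l g ∘ alphaTw l h) ∧
      (∀ g : ℝ × ℝ × ℝ, ∃ (A : Matrix (Fin 3) (Fin 3) ℝ) (b : Fin 3 → ℝ),
        IsUnit A.det ∧ ∀ v, alphaTw l g v = A.mulVec v + b) := by
  constructor
  · intro g h
    funext v i
    fin_cases i <;>
      simp [alphaTw, h3Mul, Function.comp, Matrix.cons_val_zero, Matrix.cons_val_one] <;> ring
  · intro g
    refine ⟨![![1,0,0],![0,1,0],![g.2.1,g.1,1]],
      ![g.1, l * g.2.1, (l - 1) * g.2.2 + g.1 * g.2.1], ?_, ?_⟩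
    · have : Matrix.det (![![1,0,0],![0,1,0],![g.2.1,g.1,1]] : Matrix (Fin 3) (Fin 3) ℝ) = 1 := by
        exact (by simp [Matrix.det_fin_three] : Matrix.det (Matrix.of ![![1,0,0],![0,1,0],![g.2.1,g.1,1]] : Matrix (Fin 3) (Fin 3) ℝ) = 1)
      rw [this]; exact isUnit_one
    · intro v
      funext i
      fin_cases i <;>
        simp [alphaTw, Matrix.mulVec, dotProduct, Fin.sum_univ_three] <;> ring
end

section
/- In the Lie coalgebra with structure equations de¹ = -e³∧e⁵, de² = -e³∧e⁴, de³ = de⁴ = de⁵ = de⁶ = 0, the real part of the complex 3-form Ω = (e¹ + ie⁴)∧(e² + ie⁵)∧(e³ + ie⁶) is closed: d Re Ω = 0. -/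
open ExteriorAlgebra

/-- Basis 1-forms e¹,…,e⁶ (indexed 0,…,5). -/
noncomputable def e (i : Fin 6) : ExteriorAlgebra ℝ (Fin 6 → ℝ) :=
  ExteriorAlgebra.ι ℝ (Pi.single i 1)

lemma e_sq (i : Fin 6) : e i * e i = 0 := ExteriorAlgebra.ι_sq_zero _

lemma e_sw (i j : Fin 6) : e i * e j = -(e j * e i) :=
  eq_neg_of_add_eq_zero_left (ExteriorAlgebra.ι_add_mul_swap _ _)

/-- In the Lie coalgebra with de¹ = -e³∧e⁵, de² = -e³∧e⁴, de³ = de⁴ = de⁵ = de⁶ = 0,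
the real part Re Ω = e¹∧e²∧e³ - e¹∧e⁵∧e⁶ - e⁴∧e²∧e⁶ - e⁴∧e⁵∧e³ of
Ω = (e¹+ie⁴)∧(e²+ie⁵)∧(e³+ie⁶) is closed. -/
theorem stmt13
    (d : ExteriorAlgebra ℝ (Fin 6 → ℝ) →ₗ[ℝ] ExteriorAlgebra ℝ (Fin 6 → ℝ))
    (hone : d 1 = 0)
    (hder : ∀ (x : Fin 6 → ℝ) (ω : ExteriorAlgebra ℝ (Fin 6 → ℝ)),
      d (ExteriorAlgebra.ι ℝ x * ω) = d (ExteriorAlgebra.ι ℝ x) * ω -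
        ExteriorAlgebra.ι ℝ x * d ω)
    (h1 : d (e 0) = -(e 2 * e 4))
    (h2 : d (e 1) = -(e 2 * e 3))
    (h3 : d (e 2) = 0) (h4 : d (e 3) = 0) (h5 : d (e 4) = 0) (h6 : d (e 5) = 0) :
    d (e 0 * e 1 * e 2 - e 0 * e 4 * e 5 - e 3 * e 1 * e 5 - e 3 * e 4 * e 2) = 0 := by
  have hd : ∀ (i : Fin 6) (ω : ExteriorAlgebra ℝ (Fin 6 → ℝ)),
      d (e i * ω) = d (e i) * ω - e i * d ω := fun i ω => hder _ ω
  have k1 : d (e 0 * e 1 * e 2) = 0 := by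
    rw [mul_assoc, hd, hd, h1, h2, h3]
    have a1 : e 2 * e 4 * (e 1 * e 2) = 0 := by
      simp only [mul_assoc]
      rw [e_sw 1 2]
      simp only [mul_neg]
      rw [← mul_assoc (e 4) (e 2), e_sw 4 2]
      simp only [neg_mul, mul_neg, neg_neg, mul_assoc]
      rw [← mul_assoc (e 2) (e 2), e_sq]
      simp
    have a2 : e 2 * e 3 * e 2 = 0 := by
      rw [mul_assoc, e_sw 3 2, mul_neg, ← mul_assoc, e_sq]
      simp
    rw [neg_mul, a1, neg_mul, a2]
    simp
  have k2 : d (e 0 * e 4 * e 5) = 0 := by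
    rw [mul_assoc, hd, hd, h1, h5, h6]
    have a1 : e 2 * e 4 * (e 4 * e 5) = 0 := by
      rw [mul_assoc (e 2), ← mul_assoc (e 4), e_sq]
      simp
    rw [neg_mul, a1]
    simp
  have k3 : d (e 3 * e 1 * e 5) = 0 := by
    rw [mul_assoc, hd, hd, h4, h2, h6]
    have a2 : e 3 * (e 2 * e 3 * e 5) = 0 := by
      rw [← mul_assoc, ← mul_assoc, e_sw 3 2, neg_mul, neg_mul, mul_assoc (e 2),
        e_sq]
      simp
    simp [mul_sub, a2]
  have k4 : d (e 3 * e 4 * e 2) = 0 := by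
    rw [mul_assoc, hd, hd, h4, h5, h3]
    simp
  simp [map_sub, k1, k2, k3, k4]
end

section
/- In the Lie coalgebra with structure equations df¹ = -f³∧f⁵, df² = -f³∧f⁴, df³ = 0, df⁴ = 0, df⁵ = 0, df⁶ = -f⁴∧f⁵ (the nilpotent Lie algebra (0,0,0,12,13,23) up to relabeling), for every λ ∈ ℝ \ {0,1} the 2-form ω_λ = f¹∧f⁴ + λ f²∧f⁵ + (λ-1) f³∧f⁶ is closed, and the real part of Ω_λ = (f¹+if⁴)∧(f²+iλf⁵)∧(f³+i(λ-1)f⁶) is closed. -/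
open ExteriorAlgebra

/-- Basis 1-forms f¹,…,f⁶ (indexed 0,…,5). -/
noncomputable def f (i : Fin 6) : ExteriorAlgebra ℝ (Fin 6 → ℝ) :=
  ExteriorAlgebra.ι ℝ (Pi.single i 1)

lemma fswap (i j : Fin 6) : f i * f j = -(f j * f i) :=
  eq_neg_of_add_eq_zero_left
    (ExteriorAlgebra.ι_add_mul_swap (Pi.single i 1) (Pi.single j 1))

lemma fsq (i : Fin 6) : f i * f i = 0 :=
  ExteriorAlgebra.ι_sq_zero _

lemma fsq' (i : Fin 6) (x : ExteriorAlgebra ℝ (Fin 6 → ℝ)) : f i * (f i * x) = 0 := by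
  rw [← mul_assoc, fsq, zero_mul]

lemma fswap_lt (i j : Fin 6) (h : j < i) : f i * f j = -(f j * f i) := fswap i j

lemma fswap_lt' (i j : Fin 6) (x : ExteriorAlgebra ℝ (Fin 6 → ℝ)) (h : j < i) :
    f i * (f j * x) = -(f j * (f i * x)) := by
  rw [← mul_assoc, fswap, neg_mul, mul_assoc]

/-- In the Lie coalgebra with df¹ = -f³∧f⁵, df² = -f³∧f⁴, df³ = df⁴ = df⁵ = 0,
df⁶ = -f⁴∧f⁵ (the nilpotent Lie algebra (0,0,0,12,13,23)), for every λ ∉ {0,1}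
the 2-form ω_λ = f¹∧f⁴ + λ f²∧f⁵ + (λ-1) f³∧f⁶ is closed, and the real part
Re Ω_λ = f¹∧f²∧f³ - λ(λ-1) f¹∧f⁵∧f⁶ - (λ-1) f⁴∧f²∧f⁶ - λ f⁴∧f⁵∧f³ of
Ω_λ = (f¹+if⁴)∧(f²+iλf⁵)∧(f³+i(λ-1)f⁶) is closed. -/
theorem stmt15 (l : ℝ) (hl0 : l ≠ 0) (hl1 : l ≠ 1)
    (d : ExteriorAlgebra ℝ (Fin 6 → ℝ) →ₗ[ℝ] ExteriorAlgebra ℝ (Fin 6 → ℝ))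
    (hone : d 1 = 0)
    (hder : ∀ (x : Fin 6 → ℝ) (ω : ExteriorAlgebra ℝ (Fin 6 → ℝ)),
      d (ExteriorAlgebra.ι ℝ x * ω) = d (ExteriorAlgebra.ι ℝ x) * ω -
        ExteriorAlgebra.ι ℝ x * d ω)
    (h1 : d (f 0) = -(f 2 * f 4))
    (h2 : d (f 1) = -(f 2 * f 3))
    (h3 : d (f 2) = 0) (h4 : d (f 3) = 0) (h5 : d (f 4) = 0)
    (h6 : d (f 5) = -(f 3 * f 4)) :
    d (f 0 * f 3 + l • (f 1 * f 4) + (l - 1) • (f 2 * f 5)) = 0 ∧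
      d (f 0 * f 1 * f 2 - (l * (l - 1)) • (f 0 * f 4 * f 5) -
        (l - 1) • (f 3 * f 1 * f 5) - l • (f 3 * f 4 * f 2)) = 0 := by
  have hd : ∀ (i : Fin 6) (ω : ExteriorAlgebra ℝ (Fin 6 → ℝ)),
      d (f i * ω) = d (f i) * ω - f i * d ω := fun i ω => hder _ ω
  constructor
  · rw [map_add, map_add, map_smul, map_smul, hd, hd, hd, h1, h2, h3, h4, h5, h6]
    simp only [mul_assoc, mul_zero, sub_zero, zero_mul, zero_sub, mul_neg,
      neg_mul, neg_neg, smul_neg, fswap_lt, fswap_lt', fsq, fsq', neg_zero,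
      Fin.mk_lt_mk, Nat.lt_irrefl, show ((3:Fin 6) < 4) from by decide,
      show ((2:Fin 6) < 4) from by decide]
    module
  · rw [map_sub, map_sub, map_sub, map_smul, map_smul, map_smul,
      mul_assoc, mul_assoc, mul_assoc, mul_assoc,
      hd, hd, hd, hd, hd, hd, hd, hd, h1, h2, h3, h4, h5, h6]
    simp only [mul_assoc, mul_zero, sub_zero, zero_mul, zero_sub, mul_neg,
      neg_mul, neg_neg, smul_neg, smul_zero, neg_zero, mul_sub,
      show ((1:Fin 6) < 4) from by decide, show ((1:Fin 6) < 2) from by decide,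
      show ((2:Fin 6) < 3) from by decide, show ((3:Fin 6) < 4) from by decide,
      show ((3:Fin 6) < 5) from by decide, show ((1:Fin 6) < 3) from by decide,
      show ((2:Fin 6) < 4) from by decide,
      fswap_lt, fswap_lt', fsq, fsq']
end

section
/- Let t be a real number with e^t + e^{-t} an integer greater than 2. The set Γ_t of 4×4 matrices of the form [[e^{tn₁},0,0,n₂+e^t n₃],[0,e^{-tn₁},0,n₂+e^{-t}n₃],[0,0,1,tn₁],[0,0,0,1]] with n₁,n₂,n₃ ∈ ℤ is closed under matrix multiplication and inversion, i.e. forms a subgroup of GL(4,ℝ). -/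
lemma key (t : ℝ) (m : ℤ) (hm : (m:ℝ) = Real.exp t + Real.exp (-t)) :
    ∀ n : ℤ, ∃ a b : ℤ, Real.exp (t*n) = a + b * Real.exp t ∧
      Real.exp (-(t*n)) = a + b * Real.exp (-t) := by
  have EF : Real.exp t * Real.exp (-t) = 1 := by
    rw [← Real.exp_add]; simp
  intro n
  induction n using Int.induction_on with
  | zero => exact ⟨1, 0, by simp, by simp⟩
  | succ k ih =>
    obtain ⟨a, b, h1, h2⟩ := ih
    refine ⟨-b, a + m*b, ?_, ?_⟩
    · have e1 : Real.exp (t*((k:ℤ)+1:ℤ)) = Real.exp (t*(k:ℤ)) * Real.exp t := by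
        rw [← Real.exp_add]; push_cast; ring_nf
      rw [e1, h1]; push_cast
      linear_combination (-(b:ℝ) * Real.exp t) * hm + (-(b:ℝ)) * EF
    · have e1 : Real.exp (-(t*((k:ℤ)+1:ℤ))) = Real.exp (-(t*(k:ℤ))) * Real.exp (-t) := by
        rw [← Real.exp_add]; push_cast; ring_nf
      rw [e1, h2]; push_cast
      linear_combination (-(b:ℝ) * Real.exp (-t)) * hm + (-(b:ℝ)) * EF
  | pred k ih =>
    obtain ⟨a, b, h1, h2⟩ := ih
    refine ⟨b + m*a, -a, ?_, ?_⟩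
    · have e1 : Real.exp (t*((-k:ℤ)-1:ℤ)) = Real.exp (t*(-k:ℤ)) * Real.exp (-t) := by
        rw [← Real.exp_add]; push_cast; ring_nf
      rw [e1, h1]; push_cast
      linear_combination (-(a:ℝ)) * hm + (b:ℝ) * EF
    · have e1 : Real.exp (-(t*((-k:ℤ)-1:ℤ))) = Real.exp (-(t*(-k:ℤ))) * Real.exp t := by
        rw [← Real.exp_add]; push_cast; ring_nf
      rw [e1, h2]; push_cast
      linear_combination (-(a:ℝ)) * hm + (b:ℝ) * EF



/-- The set Γ_t of 4×4 matrices of the form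
[[e^{tn₁},0,0,n₂+e^t n₃],[0,e^{-tn₁},0,n₂+e^{-t}n₃],[0,0,1,tn₁],[0,0,0,1]],
n₁,n₂,n₃ ∈ ℤ, inside E(1,1) ⊂ GL(4,ℝ). -/
noncomputable def GammaSet (t : ℝ) : Set (Matrix (Fin 4) (Fin 4) ℝ) :=
  {M | ∃ n₁ n₂ n₃ : ℤ,
    M = !![Real.exp (t * n₁), 0, 0, (n₂ : ℝ) + Real.exp t * (n₃ : ℝ);
           0, Real.exp (-(t * n₁)), 0, (n₂ : ℝ) + Real.exp (-t) * (n₃ : ℝ);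
           0, 0, 1, t * n₁;
           0, 0, 0, 1]}

/-- If e^t + e^{-t} is an integer greater than 2, then Γ_t is closed under matrix
multiplication and inversion, i.e. forms a subgroup of GL(4,ℝ). -/
theorem stmt19 (t : ℝ) (h : ∃ m : ℤ, (m : ℝ) = Real.exp t + Real.exp (-t) ∧ 2 < m) :
    (∀ A ∈ GammaSet t, ∀ B ∈ GammaSet t, A * B ∈ GammaSet t) ∧
      (∀ A ∈ GammaSet t, ∃ B ∈ GammaSet t, A * B = 1 ∧ B * A = 1) := by
  obtain ⟨m, hm, -⟩ := h
  have EF : Real.exp t * Real.exp (-t) = 1 := by rw [← Real.exp_add]; simp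
  have hE2 : Real.exp t ^ 2 = m * Real.exp t - 1 := by
    linear_combination (-Real.exp t) * hm - EF
  have hF2 : Real.exp (-t) ^ 2 = m * Real.exp (-t) - 1 := by
    linear_combination (-Real.exp (-t)) * hm - EF
  constructor
  · rintro A ⟨n₁, n₂, n₃, rfl⟩ B ⟨k₁, k₂, k₃, rfl⟩
    obtain ⟨a, b, h1, h2⟩ := key t m hm n₁
    refine ⟨n₁ + k₁, n₂ + a*k₂ - b*k₃, n₃ + b*k₂ + a*k₃ + m*b*k₃, ?_⟩
    ext i j
    fin_cases i <;> fin_cases j <;>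
      simp [Matrix.mul_apply, Fin.sum_univ_four, Matrix.vecHead, Matrix.vecTail] <;>
      push_cast
    all_goals first
      | (rw [h1]; linear_combination ((b:ℝ)*(k₃:ℝ)) * hE2)
      | (rw [h2]; linear_combination ((b:ℝ)*(k₃:ℝ)) * hF2)
      | (rw [← Real.exp_add]; try push_cast; try ring_nf)
      | ring
  · rintro A ⟨n₁, n₂, n₃, rfl⟩
    obtain ⟨a, b, h1, h2⟩ := key t m hm n₁
    have det1 : (a:ℝ)^2 + m*a*b + b^2 = 1 := by
      have key2 : ((a:ℝ) + b * Real.exp t) * ((a:ℝ) + b * Real.exp (-t)) = 1 := by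
        rw [← h1, ← h2, ← Real.exp_add]; simp
      linear_combination key2 + (a:ℝ)*(b:ℝ)*hm - (b:ℝ)^2*EF
    refine ⟨!![Real.exp (t * ((-n₁ : ℤ) : ℝ)), 0, 0, ((-(a+m*b)*n₂ - b*n₃ : ℤ) : ℝ) +
        Real.exp t * ((b*n₂ - a*n₃ : ℤ) : ℝ);
           0, Real.exp (-(t * ((-n₁ : ℤ) : ℝ))), 0, ((-(a+m*b)*n₂ - b*n₃ : ℤ) : ℝ) +
        Real.exp (-t) * ((b*n₂ - a*n₃ : ℤ) : ℝ);
           0, 0, 1, t * ((-n₁ : ℤ) : ℝ);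
           0, 0, 0, 1], ⟨-n₁, -(a+m*b)*n₂ - b*n₃, b*n₂ - a*n₃, rfl⟩, ?_, ?_⟩ <;>
    [skip; rw [Matrix.mul_eq_one_comm]] <;>
    · have hneg : Real.exp (t * ((-n₁:ℤ):ℝ)) = Real.exp (-(t * n₁)) := by push_cast; ring_nf
      have hneg' : Real.exp (-(t * ((-n₁:ℤ):ℝ))) = Real.exp (t * n₁) := by push_cast; ring_nf
      ext i j
      fin_cases i <;> fin_cases j <;>
        simp [Matrix.mul_apply, Fin.sum_univ_four, Matrix.vecHead, Matrix.vecTail,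
          Matrix.one_apply, hneg, hneg'] <;>
        push_cast
      all_goals first
        | (rw [h1]; linear_combination
            ((b:ℝ)*((b:ℝ)*(n₂:ℝ) - (a:ℝ)*(n₃:ℝ))) * hE2 -
              ((n₂:ℝ) + (n₃:ℝ)*Real.exp t) * det1)
        | (rw [h2]; linear_combination
            ((b:ℝ)*((b:ℝ)*(n₂:ℝ) - (a:ℝ)*(n₃:ℝ))) * hF2 -
              ((n₂:ℝ) + (n₃:ℝ)*Real.exp (-t)) * det1)
        | (rw [h2]; linear_combination (-(b:ℝ)*(n₂:ℝ)) * hm + ((b:ℝ)*(n₃:ℝ)) * EF)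
        | (rw [h1]; linear_combination (-(b:ℝ)*(n₂:ℝ)) * hm + ((b:ℝ)*(n₃:ℝ)) * EF)
        | (rw [← Real.exp_add]; try simp; try ring_nf)
        | ring
end
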